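/- Let K be a compact Hausdorff space and E a complex Banach space. The smallest closed (not necessarily unital) subalgebra of C(K × B_{E*}, ℂ) that contains T(C(K,E)) and is closed under complex conjugation is C⁰(K × B_{E*}) = { f ∈ C(K × B_{E*}, ℂ) : f(t, 0) = 0 for every t ∈ K }, where 0 denotes the zero functional in B_{E*}. -/

import Mathlib

noncomputable section

/-- The closed unit ball of the dual of `E`, equipped with the weak* topology. -/
abbrev DualBall (𝕜 E : Type*) [RCLike 𝕜] [NormedAddCommGroup E] [NormedSpace 𝕜 E] :=
  {φ : WeakDual 𝕜 E // ‖WeakDual.toStrongDual φ‖ ≤ 1}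

instance DualBall.instCompact (E : Type*) [NormedAddCommGroup E] [NormedSpace ℂ E] :
    CompactSpace (DualBall ℂ E) := by
  have h : IsCompact {φ : WeakDual ℂ E | ‖WeakDual.toStrongDual φ‖ ≤ 1} := by
    convert WeakDual.isCompact_closedBall (𝕜 := ℂ) (E := E) 0 1 using 1
    ext φ
    simp [Metric.mem_closedBall, dist_zero_right]
  exact isCompact_iff_compactSpace.mp h

theorem myContT (E : Type*) [NormedAddCommGroup E] [NormedSpace ℂ E]
    (K : Type*) [TopologicalSpace K] (f : C(K, E)) :
    Continuous fun p : K × DualBall ℂ E => p.2.1 (f p.1) := by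
  rw [continuous_iff_continuousAt]
  intro p₀
  have h1 : Filter.Tendsto (fun p : K × DualBall ℂ E => p.2.1 (f p.1 - f p₀.1)) (nhds p₀)
      (nhds 0) := by
    apply squeeze_zero_norm (a := fun p : K × DualBall ℂ E => ‖f p.1 - f p₀.1‖)
    · intro p
      calc ‖p.2.1 (f p.1 - f p₀.1)‖ ≤ ‖WeakDual.toStrongDual p.2.1‖ * ‖f p.1 - f p₀.1‖ :=
            ContinuousLinearMap.le_opNorm _ _
        _ ≤ 1 * ‖f p.1 - f p₀.1‖ := mul_le_mul_of_nonneg_right p.2.2 (norm_nonneg _)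
        _ = ‖f p.1 - f p₀.1‖ := one_mul _
    · have hc : Continuous fun p : K × DualBall ℂ E => ‖f p.1 - f p₀.1‖ := by fun_prop
      simpa using hc.tendsto p₀
  have h2 : Filter.Tendsto (fun p : K × DualBall ℂ E => p.2.1 (f p₀.1)) (nhds p₀)
      (nhds (p₀.2.1 (f p₀.1))) := by
    have : Continuous fun p : K × DualBall ℂ E => p.2.1 (f p₀.1) :=
      (WeakDual.eval_continuous (f p₀.1)).comp (continuous_subtype_val.comp continuous_snd)
    exact this.tendsto p₀
  have h3 := h1.add h2
  have he : (fun p : K × DualBall ℂ E => p.2.1 (f p.1 - f p₀.1) + p.2.1 (f p₀.1)) =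
      fun p : K × DualBall ℂ E => p.2.1 (f p.1) := by
    funext p; simp [map_sub]
  rw [he, zero_add] at h3
  exact h3

/-- The map `T`. -/
def Tmap (K : Type*) [TopologicalSpace K] (E : Type*) [NormedAddCommGroup E] [NormedSpace ℂ E]
    (f : C(K, E)) : C(K × DualBall ℂ E, ℂ) :=
  ⟨fun p => p.2.1 (f p.1), myContT E K f⟩


/-- The smallest closed (not necessarily unital) subalgebra of
`C(K × B_{E*}, ℂ)` containing `T(C(K,E))` and closed under complex conjugation is
`C⁰(K × B_{E*}) = { f : f(t,0) = 0 for all t ∈ K }`. -/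
theorem closed_star_subalgebra_generated_by_T_eq
    (K : Type*) [TopologicalSpace K] [CompactSpace K] [T2Space K]
    (E : Type*) [NormedAddCommGroup E] [NormedSpace ℂ E] [CompleteSpace E] :
    ⋂₀ {A : Set C(K × DualBall ℂ E, ℂ) |
        IsClosed A ∧
        (∀ (f : C(K, E)) (g : C(K × DualBall ℂ E, ℂ)),
          (∀ p : K × DualBall ℂ E, g p = p.2.1 (f p.1)) → g ∈ A) ∧
        (∀ g₁ ∈ A, ∀ g₂ ∈ A, g₁ + g₂ ∈ A) ∧
        (∀ (c : ℂ), ∀ g ∈ A, c • g ∈ A) ∧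
        (∀ g₁ ∈ A, ∀ g₂ ∈ A, g₁ * g₂ ∈ A) ∧
        (∀ g ∈ A, star g ∈ A)} =
    {g : C(K × DualBall ℂ E, ℂ) | ∀ t : K, g (t, ⟨0, by simp⟩) = 0} := by
  classical
  set z : DualBall ℂ E := ⟨0, by simp⟩ with hz
  set 𝒮 : Set (Set C(K × DualBall ℂ E, ℂ)) := {A : Set C(K × DualBall ℂ E, ℂ) |
        IsClosed A ∧
        (∀ (f : C(K, E)) (g : C(K × DualBall ℂ E, ℂ)),
          (∀ p : K × DualBall ℂ E, g p = p.2.1 (f p.1)) → g ∈ A) ∧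
        (∀ g₁ ∈ A, ∀ g₂ ∈ A, g₁ + g₂ ∈ A) ∧
        (∀ (c : ℂ), ∀ g ∈ A, c • g ∈ A) ∧
        (∀ g₁ ∈ A, ∀ g₂ ∈ A, g₁ * g₂ ∈ A) ∧
        (∀ g ∈ A, star g ∈ A)} with h𝒮
  -- the right-hand side is a member of the family
  have hRHS : {g : C(K × DualBall ℂ E, ℂ) | ∀ t : K, g (t, z) = 0} ∈ 𝒮 := by
    refine ⟨?_, ?_, ?_, ?_, ?_, ?_⟩
    · simp only [Set.setOf_forall]
      exact isClosed_iInter fun t =>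
        isClosed_eq (continuous_eval_const _) continuous_const
    · intro f g hg t
      rw [hg (t, z)]
      exact (ContinuousLinearMap.zero_apply _ : (0 : E →L[ℂ] ℂ) (f t) = 0)
    · intro g₁ h₁ g₂ h₂ t
      simp [h₁ t, h₂ t]
    · intro c g h t
      simp [h t]
    · intro g₁ h₁ g₂ h₂ t
      simp [h₁ t]
    · intro g h t
      simp [h t]
  -- properties of the intersection A₀
  set A₀ : Set C(K × DualBall ℂ E, ℂ) := ⋂₀ 𝒮 with hA₀
  have hA₀c : IsClosed A₀ := isClosed_sInter fun A hA => hA.1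
  have hA₀T : ∀ (f : C(K, E)) (g : C(K × DualBall ℂ E, ℂ)),
      (∀ p : K × DualBall ℂ E, g p = p.2.1 (f p.1)) → g ∈ A₀ :=
    fun f g h => Set.mem_sInter.2 fun A hA => hA.2.1 f g h
  have hadd : ∀ g₁ ∈ A₀, ∀ g₂ ∈ A₀, g₁ + g₂ ∈ A₀ := fun g₁ h₁ g₂ h₂ =>
    Set.mem_sInter.2 fun A hA => hA.2.2.1 g₁ (Set.mem_sInter.1 h₁ A hA) g₂ (Set.mem_sInter.1 h₂ A hA)
  have hsmul : ∀ (c : ℂ), ∀ g ∈ A₀, c • g ∈ A₀ := fun c g h =>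
    Set.mem_sInter.2 fun A hA => hA.2.2.2.1 c g (Set.mem_sInter.1 h A hA)
  have hmul : ∀ g₁ ∈ A₀, ∀ g₂ ∈ A₀, g₁ * g₂ ∈ A₀ := fun g₁ h₁ g₂ h₂ =>
    Set.mem_sInter.2 fun A hA => hA.2.2.2.2.1 g₁ (Set.mem_sInter.1 h₁ A hA) g₂ (Set.mem_sInter.1 h₂ A hA)
  have hstar : ∀ g ∈ A₀, star g ∈ A₀ := fun g h =>
    Set.mem_sInter.2 fun A hA => hA.2.2.2.2.2 g (Set.mem_sInter.1 h A hA)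
  have hTmem : ∀ f : C(K, E), Tmap K E f ∈ A₀ := fun f => hA₀T f _ (fun p => rfl)
  have hzero : (0 : C(K × DualBall ℂ E, ℂ)) ∈ A₀ := hA₀T 0 0 (by intro p; simp)
  have hA₀sub : A₀ ⊆ {g : C(K × DualBall ℂ E, ℂ) | ∀ t : K, g (t, z) = 0} :=
    Set.sInter_subset_of_mem hRHS
  -- A₀ is stable under multiplication by pullbacks of C(K, ℂ)
  have hψmul : ∀ (ψ : C(K, ℂ)), ∀ a ∈ A₀,
      ψ.comp (ContinuousMap.fst) * a ∈ A₀ := by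
    have hA' : {a ∈ A₀ | ∀ ψ : C(K, ℂ), ψ.comp (ContinuousMap.fst) * a ∈ A₀} ∈ 𝒮 := by
      refine ⟨?_, ?_, ?_, ?_, ?_, ?_⟩
      · have he : {a ∈ A₀ | ∀ ψ : C(K, ℂ), ψ.comp (ContinuousMap.fst) * a ∈ A₀} =
            A₀ ∩ ⋂ ψ : C(K, ℂ), (fun a => ψ.comp (ContinuousMap.fst) * a) ⁻¹' A₀ := by
          ext a; simp [Set.mem_iInter]
        rw [he]
        exact hA₀c.inter (isClosed_iInter fun ψ => hA₀c.preimage (continuous_mul_left _))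
      · intro f g hg
        refine ⟨hA₀T f g hg, fun ψ => ?_⟩
        refine hA₀T ⟨fun t => ψ t • f t, by fun_prop⟩ _ fun p => ?_
        simp [hg p, map_smul, smul_eq_mul]
      · rintro g₁ ⟨m₁, h₁⟩ g₂ ⟨m₂, h₂⟩
        exact ⟨hadd _ m₁ _ m₂, fun ψ => by rw [mul_add]; exact hadd _ (h₁ ψ) _ (h₂ ψ)⟩
      · rintro c g ⟨m, h⟩
        exact ⟨hsmul c _ m, fun ψ => by rw [mul_smul_comm]; exact hsmul c _ (h ψ)⟩
      · rintro g₁ ⟨m₁, h₁⟩ g₂ ⟨m₂, h₂⟩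
        exact ⟨hmul _ m₁ _ m₂, fun ψ => by rw [← mul_assoc]; exact hmul _ (h₁ ψ) _ m₂⟩
      · rintro g ⟨m, h⟩
        refine ⟨hstar _ m, fun ψ => ?_⟩
        have he : ψ.comp (ContinuousMap.fst) * star g =
            star ((star ψ).comp (ContinuousMap.fst) * g) := by
          ext p
          simp [star_mul', mul_comm]
        rw [he]
        exact hstar _ (h (star ψ))
    intro ψ a ha
    exact (Set.sInter_subset_of_mem hA' ha).2 ψ
  -- the multiplier algebra is everything
  have hmulAll : ∀ h : C(K × DualBall ℂ E, ℂ), ∀ a ∈ A₀, h * a ∈ A₀ := by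
    let D : StarSubalgebra ℂ C(K × DualBall ℂ E, ℂ) :=
      { carrier := {h | ∀ a ∈ A₀, h * a ∈ A₀}
        mul_mem' := fun hx hy a ha => by
          rw [mul_assoc]; exact hx _ (hy a ha)
        add_mem' := fun hx hy a ha => by
          rw [add_mul]; exact hadd _ (hx a ha) _ (hy a ha)
        algebraMap_mem' := fun c a ha => by
          rw [← Algebra.smul_def]; exact hsmul c a ha
        star_mem' := fun {h} hh a ha => by
          have he : star h * a = star (h * star a) := by
            rw [star_mul, star_star, mul_comm]
          rw [he]
          exact hstar _ (hh _ (hstar a ha)) }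
    have hDc : IsClosed (D : Set C(K × DualBall ℂ E, ℂ)) := by
      have he : (D : Set C(K × DualBall ℂ E, ℂ)) =
          ⋂ a ∈ A₀, (fun h => h * a) ⁻¹' A₀ := by
        ext h
        simp only [Set.mem_iInter, Set.mem_preimage]
        rfl
      rw [he]
      exact isClosed_biInter fun a ha => hA₀c.preimage (continuous_mul_right _)
    have hDsep : D.SeparatesPoints := by
      intro x y hxy
      by_cases hK : x.1 = y.1
      · have h2 : x.2 ≠ y.2 := fun h => hxy (Prod.ext hK h)
        have h3 : (x.2.1 : WeakDual ℂ E) ≠ y.2.1 := fun h => h2 (Subtype.ext h)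
        have h4 : ∃ e : E, x.2.1 e ≠ y.2.1 e := by
          by_contra hc
          push_neg at hc
          exact h3 (DFunLike.ext _ _ hc)
        obtain ⟨e, he⟩ := h4
        refine ⟨_, ⟨Tmap K E (ContinuousMap.const K e), fun a ha => hmul _ (hTmem _) _ ha, rfl⟩, ?_⟩
        simpa [Tmap] using he
      · obtain ⟨φ, hφ0, hφ1, -⟩ := exists_continuous_zero_one_of_isClosed
          (isClosed_singleton (x := x.1)) (isClosed_singleton (x := y.1))
          (by simpa using hK)
        let ψ : C(K, ℂ) := ⟨fun t => (φ t : ℂ), by fun_prop⟩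
        refine ⟨_, ⟨ψ.comp (ContinuousMap.fst), fun a ha => hψmul ψ a ha, rfl⟩, ?_⟩
        have hx0 : φ x.1 = 0 := hφ0 rfl
        have hy1 : φ y.1 = 1 := hφ1 rfl
        simp [ψ, hx0, hy1]
    have htop := ContinuousMap.starSubalgebra_topologicalClosure_eq_top_of_separatesPoints D hDsep
    intro h
    have hmem : h ∈ D.topologicalClosure := by rw [htop]; exact trivial
    have hmem2 : h ∈ closure (D : Set C(K × DualBall ℂ E, ℂ)) := by
      rwa [← StarSubalgebra.topologicalClosure_coe]
    rwa [hDc.closure_eq] at hmem2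
  -- A₀ is a closed ideal
  let I : Ideal C(K × DualBall ℂ E, ℂ) :=
    { carrier := A₀
      add_mem' := fun ha hb => hadd _ ha _ hb
      zero_mem' := hzero
      smul_mem' := fun c x hx => by rw [smul_eq_mul]; exact hmulAll c _ hx }
  have hIc : I.closure = I := Ideal.closure_eq_of_isClosed I hA₀c
  have key := ContinuousMap.idealOfSet_ofIdeal_eq_closure I
  rw [hIc] at key
  -- functions outside the support set are exactly those over the zero functional
  have hcompl : ∀ x : K × DualBall ℂ E, x ∉ ContinuousMap.setOfIdeal I → x.2 = z := by
    intro x hx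
    by_contra hne
    have h3 : (x.2.1 : WeakDual ℂ E) ≠ 0 := fun h => hne (Subtype.ext h)
    have h4 : ∃ e : E, x.2.1 e ≠ 0 := by
      by_contra hc
      push_neg at hc
      exact h3 (DFunLike.ext _ _ hc)
    obtain ⟨e, he⟩ := h4
    exact hx (ContinuousMap.mem_setOfIdeal.mpr
      ⟨Tmap K E (ContinuousMap.const K e), hTmem _, by simpa [Tmap] using he⟩)
  -- conclude
  apply subset_antisymm
  · exact Set.sInter_subset_of_mem hRHS
  · intro g hg
    have hgI : g ∈ ContinuousMap.idealOfSet ℂ (ContinuousMap.setOfIdeal I) := by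
      rw [ContinuousMap.mem_idealOfSet]
      intro x hx
      have h2 := hcompl x hx
      have h3 : x = (x.1, z) := by rw [← h2]
      rw [h3]
      exact hg x.1
    rw [key] at hgI
    exact hgI
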